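/- For every integer k ≥ 3, the Nimber of Jacob's Ladder on the cycle C_{2k} is 0, and the Nimber of the disjoint sum of two copies of Jacob's Ladder on the cycle C_k is 0. -/

import Mathlib

namespace Toggle

variable {V : Type*} [Fintype V] [DecidableEq V]

/-- The closed neighborhood `N[v]` of a vertex as a `Finset`. -/
def closedNbhd (G : SimpleGraph V) [DecidableRel G.Adj] (v : V) : Finset V :=
  insert v (G.neighborFinset v)

/-- The result of a Toggle move at `v`: flip the weight of every vertex in `N[v]`. -/
def move (G : SimpleGraph V) [DecidableRel G.Adj] (ω : V → Bool) (v : V) : V → Bool :=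
  fun u => if u ∈ closedNbhd G v then !(ω u) else ω u

/-- Total weight of a position. -/
def weight (ω : V → Bool) : ℕ := (Finset.univ.filter (fun u => ω u = true)).card

/-- Weight of a position over the closed neighborhood of `v`. -/
def nbhdWeight (G : SimpleGraph V) [DecidableRel G.Adj] (ω : V → Bool) (v : V) : ℕ :=
  ((closedNbhd G v).filter (fun u => ω u = true)).card

/-- A Toggle move at `v` is legal iff `ω v = 1` and the move strictly decreases the
weight over `N[v]`. -/
def IsLegal (G : SimpleGraph V) [DecidableRel G.Adj] (ω : V → Bool) (v : V) : Prop :=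
  ω v = true ∧ nbhdWeight G (move G ω v) v < nbhdWeight G ω v

instance (G : SimpleGraph V) [DecidableRel G.Adj] (ω : V → Bool) (v : V) :
    Decidable (IsLegal G ω v) :=
  inferInstanceAs (Decidable (ω v = true ∧ nbhdWeight G (move G ω v) v < nbhdWeight G ω v))

theorem weight_move_lt (G : SimpleGraph V) [DecidableRel G.Adj] {ω : V → Bool} {v : V}
    (h : IsLegal G ω v) : weight (move G ω v) < weight ω := by
  have key : ∀ ψ : V → Bool,
      weight ψ = ((closedNbhd G v).filter (fun u => ψ u = true)).card
        + ((Finset.univ \ closedNbhd G v).filter (fun u => ψ u = true)).card := by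
    intro ψ
    rw [weight, ← Finset.card_union_of_disjoint
      (Finset.disjoint_filter_filter Finset.disjoint_sdiff)]
    congr 1
    ext u
    simp only [Finset.mem_filter, Finset.mem_union, Finset.mem_sdiff, Finset.mem_univ,
      true_and]
    tauto
  have hout : ((Finset.univ \ closedNbhd G v).filter (fun u => move G ω v u = true))
      = ((Finset.univ \ closedNbhd G v).filter (fun u => ω u = true)) := by
    apply Finset.filter_congr
    intro u hu
    rw [Finset.mem_sdiff] at hu
    simp [move, hu.2]
  have h2 := h.2
  rw [key (move G ω v), key ω, hout]
  unfold nbhdWeight at h2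
  omega

/-- Minimal excludant of a finite set of naturals. -/
noncomputable def mex (s : Finset ℕ) : ℕ := sInf {n : ℕ | n ∉ s}

/-- The Nimber (Grundy value) of a Toggle position. -/
noncomputable def grundy (G : SimpleGraph V) [DecidableRel G.Adj] (ω : V → Bool) : ℕ :=
  mex ((Finset.univ.filter (fun v => IsLegal G ω v)).attach.image
    (fun v => grundy G (move G ω v.1)))
termination_by weight ω
decreasing_by
  have hv := v.2
  rw [Finset.mem_filter] at hv
  exact weight_move_lt G hv.2

/-- One legal Toggle move transforms `ω` into `ω'`. -/
def Step (G : SimpleGraph V) [DecidableRel G.Adj] (ω ω' : V → Bool) : Prop :=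
  ∃ v, IsLegal G ω v ∧ ω' = move G ω v

/-- `ω'` is reachable from `ω` by a (possibly empty) sequence of legal moves. -/
def Reach (G : SimpleGraph V) [DecidableRel G.Adj] (ω ω' : V → Bool) : Prop :=
  Relation.ReflTransGen (Step G) ω ω'

/-- `v` is terminally unplayable at `ω`: unplayable at `ω` and at every position
reachable from `ω`. -/
def TerminallyUnplayable (G : SimpleGraph V) [DecidableRel G.Adj] (ω : V → Bool) (v : V) :
    Prop :=
  ∀ ω', Reach G ω ω' → ¬ IsLegal G ω' v

/-- `v` is penultimately unplayable for the initial position `ω₀`: at every position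
reachable from `ω₀`, after any legal move at a vertex `u ∈ N[v]`, the vertex `v` is
terminally unplayable. -/
def PenultimatelyUnplayableAt (G : SimpleGraph V) [DecidableRel G.Adj] (ω₀ : V → Bool)
    (v : V) : Prop :=
  ∀ ω', Reach G ω₀ ω' → ∀ u ∈ closedNbhd G v, IsLegal G ω' u →
    TerminallyUnplayable G (move G ω' u) v

/-- The position `ω₀` is penultimately unplayable if every vertex is. -/
def PenultimatelyUnplayable (G : SimpleGraph V) [DecidableRel G.Adj] (ω₀ : V → Bool) :
    Prop :=
  ∀ v, PenultimatelyUnplayableAt G ω₀ v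

/-- The path graph on `Fin n`, vertices `0, 1, …, n-1` in order. -/
def pathGraph (n : ℕ) : SimpleGraph (Fin n) :=
  SimpleGraph.fromRel (fun a b => (a : ℕ) + 1 = (b : ℕ))

instance (n : ℕ) : DecidableRel (pathGraph n).Adj := fun a b =>
  decidable_of_iff _ (SimpleGraph.fromRel_adj _ a b).symm

/-- The 2×m grid graph `L_{2,m}` (0-indexed rows and columns). -/
def gridGraph (m : ℕ) : SimpleGraph (Fin 2 × Fin m) :=
  SimpleGraph.fromRel (fun a b =>
    (a.1 = b.1 ∧ (a.2 : ℕ) + 1 = (b.2 : ℕ)) ∨ (a.2 = b.2 ∧ (a.1 : ℕ) + 1 = (b.1 : ℕ)))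

instance (m : ℕ) : DecidableRel (gridGraph m).Adj := fun a b =>
  decidable_of_iff _ (SimpleGraph.fromRel_adj _ a b).symm

/-- The generalized Petersen graph `P(m,k)`; the vertex `(0, i)` is the outer vertex
`u_i` and `(1, i)` is the inner vertex `w_i` (0-indexed). -/
def petersen (m k : ℕ) : SimpleGraph (Fin 2 × Fin m) :=
  SimpleGraph.fromRel (fun a b =>
    (a.1 = 0 ∧ b.1 = 0 ∧ ((a.2 : ℕ) + 1) % m = (b.2 : ℕ)) ∨
    (a.1 = 0 ∧ b.1 = 1 ∧ a.2 = b.2) ∨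
    (a.1 = 1 ∧ b.1 = 1 ∧ ((a.2 : ℕ) + k) % m = (b.2 : ℕ)))

instance (m k : ℕ) : DecidableRel (petersen m k).Adj := fun a b =>
  decidable_of_iff _ (SimpleGraph.fromRel_adj _ a b).symm

/-- The position on `P(m,k)` where every outer vertex has weight 1 and every inner
vertex has weight 0. -/
def P01 (m : ℕ) : Fin 2 × Fin m → Bool := fun p => decide (p.1 = 0)

/-- The position on `P(m,k)` where every inner vertex has weight 1 and every outer
vertex has weight 0. -/
def P10 (m : ℕ) : Fin 2 × Fin m → Bool := fun p => decide (p.1 = 1)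

/-- The position where every vertex has weight 1. -/
def P11 (m : ℕ) : Fin 2 × Fin m → Bool := fun _ => true

/-- The Toggle position `H_m` on `L_{2,m}` (columns 0-indexed): for `m ≠ 3`, weight 0
exactly at `(0,0), (0,m-1), (1,0), (1,1), (1,m-2), (1,m-1)`; for `m = 3`, weight 0
exactly at `(0,0), (0,2), (1,0), (1,2)`. -/
def Hpos (m : ℕ) : Fin 2 × Fin m → Bool := fun p =>
  if m = 3 then !(decide ((p.2 : ℕ) = 0 ∨ (p.2 : ℕ) = 2))
  else !(decide ((p.1 = 0 ∧ ((p.2 : ℕ) = 0 ∨ (p.2 : ℕ) = m - 1)) ∨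
                 (p.1 = 1 ∧ ((p.2 : ℕ) ≤ 1 ∨ m - 2 ≤ (p.2 : ℕ)))))

/-- The Toggle position `D_m` on `L_{2,m}` (columns 0-indexed): weight 0 exactly at
`(0,0), (0,m-2), (0,m-1), (1,0), (1,1), (1,m-1)`. -/
def Dpos (m : ℕ) : Fin 2 × Fin m → Bool := fun p =>
  !(decide ((p.1 = 0 ∧ ((p.2 : ℕ) = 0 ∨ m - 2 ≤ (p.2 : ℕ))) ∨
            (p.1 = 1 ∧ ((p.2 : ℕ) ≤ 1 ∨ (p.2 : ℕ) = m - 1))))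

/-- The Nimber of the position `H_m`. -/
noncomputable def GH (m : ℕ) : ℕ := grundy (gridGraph m) (Hpos m)

/-- The Nimber of the position `D_m`. -/
noncomputable def GD (m : ℕ) : ℕ := grundy (gridGraph m) (Dpos m)

/-- The cycle graph `C_m` on `Fin m`. -/
def cycleGraph (m : ℕ) : SimpleGraph (Fin m) :=
  SimpleGraph.fromRel (fun a b => ((a : ℕ) + 1) % m = (b : ℕ))

open scoped Classical in
/-- The Nimber of a position of Jacob's Ladder on `C_m`: a position is the `Finset` of
not-yet-removed vertices, and a move at a remaining vertex `v` removes all remaining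
vertices at distance at most 2 from `v` in `C_m`. -/
noncomputable def jlGrundy (m : ℕ) (S : Finset (Fin m)) : ℕ :=
  mex (S.attach.image (fun v =>
    jlGrundy m (S.filter (fun u => 2 < (cycleGraph m).dist v.1 u))))
termination_by S.card
decreasing_by
  apply Finset.card_lt_card
  rw [Finset.ssubset_iff_of_subset (Finset.filter_subset _ _)]
  exact ⟨v.1, v.2, by simp [SimpleGraph.dist_self]⟩

namespace JLaux
open scoped Fin.NatCast Fin.CommRing
section Cycle
variable {m : ℕ} [NeZero m]

lemma cyc_adj {a b : Fin m} :
    (cycleGraph m).Adj a b ↔ a ≠ b ∧ (a + 1 = b ∨ b + 1 = a) := by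
  rw [cycleGraph, SimpleGraph.fromRel_adj]
  constructor
  · rintro ⟨hne, h | h⟩
    · exact ⟨hne, Or.inl (Fin.ext (by rw [Fin.add_def]; simpa using h))⟩
    · exact ⟨hne, Or.inr (Fin.ext (by rw [Fin.add_def]; simpa using h))⟩
  · rintro ⟨hne, h | h⟩
    · exact ⟨hne, Or.inl (by rw [← h, Fin.add_def]; simp)⟩
    · exact ⟨hne, Or.inr (by rw [← h, Fin.add_def]; simp)⟩

lemma cyc_adj_succ (hm : 2 ≤ m) (a : Fin m) : (cycleGraph m).Adj a (a + 1) := by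
  rw [cyc_adj]
  refine ⟨fun h => ?_, Or.inl rfl⟩
  have hv := congrArg Fin.val h
  rw [Fin.add_def] at hv
  simp at hv
  have hlt := a.is_lt
  rcases Nat.lt_or_ge ((a:ℕ) + 1) m with h2 | h2
  · rw [Nat.mod_eq_of_lt h2] at hv; omega
  · have h3 : (a:ℕ) + 1 = m := by omega
    rw [h3, Nat.mod_self] at hv; omega

lemma cyc_reach (hm : 2 ≤ m) (a b : Fin m) : (cycleGraph m).Reachable a b := by
  have key : ∀ j : ℕ, (cycleGraph m).Reachable a (a + (j : Fin m)) := by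
    intro j
    induction j with
    | zero => simpa using SimpleGraph.Reachable.refl a
    | succ n ih =>
      refine ih.trans ?_
      have : (((n+1 : ℕ)) : Fin m) = (n : Fin m) + 1 := by push_cast; ring
      rw [this, ← add_assoc]
      exact (cyc_adj_succ hm _).reachable
  have := key ((b - a) : Fin m).val
  rwa [Fin.cast_val_eq_self, add_sub_cancel] at this

lemma walk_shift {a b : Fin m} (p : (cycleGraph m).Walk a b) :
    ∃ j : ℕ, j ≤ p.length ∧ (a + (j : Fin m) = b ∨ b + (j : Fin m) = a) := by
  induction p with
  | nil => exact ⟨0, by simp, Or.inl (by simp)⟩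
  | @cons a c b h p ih =>
    obtain ⟨j, hj, hcase⟩ := ih
    obtain ⟨-, h1 | h1⟩ := cyc_adj.1 h
    · rcases hcase with h2 | h2
      · refine ⟨j + 1, by simp [SimpleGraph.Walk.length_cons]; omega, Or.inl ?_⟩
        push_cast
        rw [← h2, ← h1]; ring
      · cases j with
        | zero =>
          refine ⟨1, by simp [SimpleGraph.Walk.length_cons], Or.inl ?_⟩
          simp at h2
          rw [h2, ← h1]; simp
        | succ j' =>
          refine ⟨j', by simp [SimpleGraph.Walk.length_cons]; omega, Or.inr ?_⟩
          have : b + ((j':ℕ) : Fin m) + 1 = a + 1 := by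
            rw [h1]
            rw [← h2]; push_cast; ring
          exact add_right_cancel this
    · rcases hcase with h2 | h2
      · cases j with
        | zero =>
          refine ⟨1, by simp [SimpleGraph.Walk.length_cons], Or.inr ?_⟩
          simp only [Nat.cast_zero, add_zero] at h2
          rw [← h2]
          simpa using h1
        | succ j' =>
          refine ⟨j', by simp [SimpleGraph.Walk.length_cons]; omega, Or.inl ?_⟩
          have : a + ((j':ℕ) : Fin m) = c + 1 + ((j':ℕ):Fin m) := by rw [h1]
          rw [this, ← h2]; push_cast; ring
      · refine ⟨j + 1, by simp [SimpleGraph.Walk.length_cons]; omega, Or.inr ?_⟩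
        push_cast
        rw [← h1, ← h2]; ring

/-- rotation is a graph automorphism -/
def rotIso (c : Fin m) : cycleGraph m ≃g cycleGraph m where
  toEquiv := Equiv.addRight c
  map_rel_iff' := by
    intro a b
    simp only [Equiv.coe_addRight, cyc_adj]
    constructor
    · rintro ⟨hne, h | h⟩
      · refine ⟨fun h' => hne (by rw [h']), Or.inl ?_⟩
        have h2 : a + 1 + c = b + c := by rw [← h]; ring
        exact add_right_cancel h2
      · refine ⟨fun h' => hne (by rw [h']), Or.inr ?_⟩
        have h2 : b + 1 + c = a + c := by rw [← h]; ring
        exact add_right_cancel h2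
    · rintro ⟨hne, h | h⟩
      · exact ⟨fun h' => hne (add_right_cancel h'), Or.inl (by rw [← h]; ring)⟩
      · exact ⟨fun h' => hne (add_right_cancel h'), Or.inr (by rw [← h]; ring)⟩

lemma dist_add (hm : 2 ≤ m) (a b c : Fin m) :
    (cycleGraph m).dist (a + c) (b + c) = (cycleGraph m).dist a b := by
  have gen : ∀ (x y d : Fin m),
      (cycleGraph m).dist (x + d) (y + d) ≤ (cycleGraph m).dist x y := by
    intro x y d
    obtain ⟨p, hp⟩ := (cyc_reach hm x y).exists_walk_length_eq_dist
    have := SimpleGraph.dist_le (p.map (rotIso d).toHom)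
    simp only [SimpleGraph.Walk.length_map, hp] at this
    exact this
  refine le_antisymm (gen a b c) ?_
  have := gen (a + c) (b + c) (-c)
  simpa using this

end Cycle

lemma mex_eq_zero {s : Finset ℕ} (h : 0 ∉ s) : mex s = 0 :=
  Nat.sInf_eq_zero.2 (Or.inl h)

lemma mex_ne_zero {s : Finset ℕ} (h : 0 ∈ s) : mex s ≠ 0 := by
  intro h0
  rcases Nat.sInf_eq_zero.1 h0 with h1 | h1
  · exact h1 h
  · obtain ⟨n, hn⟩ := Infinite.exists_notMem_finset s
    have : n ∈ ({n | n ∉ s} : Set ℕ) := hn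
    rw [h1] at this
    exact this

lemma kk_zero (k : ℕ) [NeZero (2*k)] : (k : Fin (2*k)) + (k : Fin (2*k)) = 0 := by
  have h : ((k + k : ℕ) : Fin (2*k)) = (k : Fin (2*k)) + (k : Fin (2*k)) := by push_cast; ring
  rw [← h, ← two_mul, Fin.natCast_self]

lemma dist_gt2 (k : ℕ) (hk : 3 ≤ k) [NeZero (2*k)] (v : Fin (2*k)) :
    2 < (cycleGraph (2*k)).dist v (v + (k : Fin (2*k))) := by
  by_contra hcon
  push_neg at hcon
  have hm : 2 ≤ 2*k := by omega
  obtain ⟨p, hp⟩ := (cyc_reach hm v (v + (k : Fin (2*k)))).exists_walk_length_eq_dist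
  obtain ⟨j, hj, hc⟩ := walk_shift p
  rw [hp] at hj
  have hjle : j ≤ 2 := le_trans hj hcon
  rcases hc with h | h
  · have hjk : (j : Fin (2*k)) = (k : Fin (2*k)) := by
      exact add_left_cancel h
    have := congrArg Fin.val hjk
    rw [Fin.val_cast_of_lt (by omega : j < 2*k),
        Fin.val_cast_of_lt (by omega : k < 2*k)] at this
    omega
  · have h2 : v + ((k : Fin (2*k)) + (j : Fin (2*k))) = v + 0 := by
      rw [← add_assoc, add_zero]; exact h
    have h3 : ((k + j : ℕ) : Fin (2*k)) = 0 := by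
      have := add_left_cancel h2
      push_cast
      rw [this]
    have := congrArg Fin.val h3
    rw [Fin.val_cast_of_lt (by omega : k + j < 2*k)] at this
    simp at this
    omega

lemma symm_zero (k : ℕ) [NeZero (2*k)] (hk : 3 ≤ k) :
    ∀ n (S : Finset (Fin (2*k))), S.card = n →
      (∀ x : Fin (2*k), x ∈ S ↔ x + (k : Fin (2*k)) ∈ S) →
      jlGrundy (2*k) S = 0 := by
  have hm : 2 ≤ 2*k := by omega
  intro n
  induction n using Nat.strong_induction_on with
  | _ n ih =>
  intro S hcard hS
  rw [jlGrundy]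
  apply mex_eq_zero
  simp only [Finset.mem_image, Finset.mem_attach, true_and, not_exists]
  intro v
  rw [jlGrundy]
  apply mex_ne_zero
  rw [Finset.mem_image]
  have hwS : v.1 + (k : Fin (2*k)) ∈ S.filter (fun u => 2 < (cycleGraph (2*k)).dist v.1 u) := by
    rw [Finset.mem_filter]
    exact ⟨(hS v.1).1 v.2, dist_gt2 k hk v.1⟩
  refine ⟨⟨v.1 + (k : Fin (2*k)), hwS⟩, Finset.mem_attach _ _, ?_⟩
  have hsub : ((S.filter (fun u => 2 < (cycleGraph (2*k)).dist v.1 u)).filter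
      (fun u => 2 < (cycleGraph (2*k)).dist (v.1 + (k : Fin (2*k))) u)) ⊆ S :=
    (Finset.filter_subset _ _).trans (Finset.filter_subset _ _)
  apply ih _ ?_ _ rfl ?_
  · -- card bound
    rw [← hcard]
    apply Finset.card_lt_card
    rw [Finset.ssubset_iff_of_subset hsub]
    refine ⟨v.1, v.2, ?_⟩
    intro hmem
    rw [Finset.mem_filter, Finset.mem_filter] at hmem
    have := hmem.1.2
    simp [SimpleGraph.dist_self] at this
  · -- symmetry
    intro x
    have hd1 : (cycleGraph (2*k)).dist (v.1 + (k : Fin (2*k))) (x + (k : Fin (2*k)))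
        = (cycleGraph (2*k)).dist v.1 x := dist_add hm _ _ _
    have hd2 : (cycleGraph (2*k)).dist v.1 (x + (k : Fin (2*k)))
        = (cycleGraph (2*k)).dist (v.1 + (k : Fin (2*k))) x := by
      have h := dist_add hm v.1 (x + (k : Fin (2*k))) (k : Fin (2*k))
      rw [add_assoc x, kk_zero, add_zero] at h
      exact h.symm
    simp only [Finset.mem_filter, hd1, hd2]
    rw [← hS x]
    tauto

lemma univ_symm_zero (k : ℕ) (hk : 3 ≤ k) : jlGrundy (2*k) Finset.univ = 0 := by
  haveI : NeZero (2*k) := ⟨by omega⟩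
  exact symm_zero k hk _ _ rfl (fun x => by simp)


end JLaux

end Toggle

/-- for `k ≥ 3`, the Nimber of Jacob's Ladder on `C_{2k}` is 0, and the
Nimber of the disjoint sum of two copies of Jacob's Ladder on `C_k` (the nim-sum,
i.e. bitwise XOR, of their Nimbers) is 0. -/
theorem statement12 (k : ℕ) (hk : 3 ≤ k) :
    Toggle.jlGrundy (2 * k) Finset.univ = 0 ∧
    (Toggle.jlGrundy k Finset.univ ^^^ Toggle.jlGrundy k Finset.univ) = 0 :=
  ⟨Toggle.JLaux.univ_symm_zero k hk, Nat.xor_self _⟩
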